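/- Let H be an arrangement of N hyperplanes in R^n. Then the number of (full-dimensional) regions of H (i.e., nonempty connected open sets obtained by intersecting, for each hyperplane, one of its two open half-spaces) is at most the sum over k=0..n of binomial(N, k). -/

import Mathlib

set_option maxHeartbeats 1000000

def openHalfspace {n : ℕ} (ℓ : (Fin n → ℝ) →ᵃ[ℝ] ℝ) (b : Bool) : Set (Fin n → ℝ) :=
  if b then {x | 0 < ℓ x} else {x | ℓ x < 0}

def arrRegion {n N : ℕ} (ℓ : Fin N → ((Fin n → ℝ) →ᵃ[ℝ] ℝ)) (s : Fin N → Bool) :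
    Set (Fin n → ℝ) :=
  ⋂ i, openHalfspace (ℓ i) (s i)

lemma halfspace_lineMap {n : ℕ} (ℓ : (Fin n → ℝ) →ᵃ[ℝ] ℝ) (b : Bool)
    {x y : Fin n → ℝ} (hx : x ∈ openHalfspace ℓ b) (hy : y ∈ openHalfspace ℓ b)
    {t : ℝ} (ht0 : 0 ≤ t) (ht1 : t ≤ 1) :
    AffineMap.lineMap x y t ∈ openHalfspace ℓ b := by
  have h : ℓ (AffineMap.lineMap x y t) = ℓ x + t * (ℓ y - ℓ x) := by
    rw [AffineMap.apply_lineMap, AffineMap.lineMap_apply]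
    simp [smul_eq_mul]
    ring
  cases b
  · simp only [openHalfspace, Bool.false_eq_true, if_false, Set.mem_setOf_eq] at hx hy ⊢
    rw [h]
    rcases eq_or_lt_of_le ht0 with h0 | h0
    · subst h0; simpa using hx
    · nlinarith [mul_pos h0 (neg_pos.2 hy), mul_nonneg (sub_nonneg.2 ht1) (neg_nonneg.2 hx.le)]
  · simp only [openHalfspace, if_true, Set.mem_setOf_eq] at hx hy ⊢
    rw [h]
    rcases eq_or_lt_of_le ht0 with h0 | h0
    · subst h0; simpa using hx
    · nlinarith [mul_pos h0 hy, mul_nonneg (sub_nonneg.2 ht1) hx.le]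

lemma dim_zero {N : ℕ} (ℓ : Fin N → ((Fin 0 → ℝ) →ᵃ[ℝ] ℝ)) :
    {s : Fin N → Bool | (arrRegion ℓ s).Nonempty}.ncard ≤ 1 := by
  rw [Set.ncard_le_one_iff]
  rintro a b ⟨x, hx⟩ ⟨y, hy⟩
  have hxy : x = y := Subsingleton.elim x y
  subst hxy
  funext i
  have hxi := Set.mem_iInter.1 hx i
  have hyi := Set.mem_iInter.1 hy i
  cases ha : a i <;> cases hb : b i <;>
    simp only [ha, hb, openHalfspace, if_true, if_false, Set.mem_setOf_eq,
      Bool.false_eq_true, ite_false, ite_true] at hxi hyi ⊢ <;> linarith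

lemma exists_param {n : ℕ} (L : (Fin (n+1) → ℝ) →ᵃ[ℝ] ℝ) (hL : L.linear ≠ 0) :
    ∃ e : (Fin n → ℝ) →ᵃ[ℝ] (Fin (n+1) → ℝ), ∀ z, L z = 0 → ∃ y, e y = z := by
  set f := L.linear with hf
  have hrange : LinearMap.range f = ⊤ := by
    rcases eq_bot_or_eq_top (LinearMap.range f) with h | h
    · exact absurd (LinearMap.range_eq_bot.1 h) hL
    · exact h
  have hker : Module.finrank ℝ (LinearMap.ker f) = n := by
    have h1 := LinearMap.finrank_range_add_finrank_ker f
    rw [hrange, finrank_top] at h1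
    have h2 : Module.finrank ℝ (Fin (n+1) → ℝ) = n + 1 := Module.finrank_fin_fun ℝ
    have h3 : Module.finrank ℝ ℝ = 1 := Module.finrank_self ℝ
    omega
  obtain ⟨g⟩ : Nonempty ((Fin n → ℝ) ≃ₗ[ℝ] LinearMap.ker f) := by
    apply FiniteDimensional.nonempty_linearEquiv_of_finrank_eq
    rw [hker]; exact Module.finrank_fin_fun ℝ
  have hdecomp : ∀ x, L x = f x + L 0 := by
    intro x
    conv_lhs => rw [AffineMap.decomp L]
    simp
    rfl
  obtain ⟨u, hu⟩ : ∃ u, f u = -(L 0) := by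
    have : (-(L 0)) ∈ LinearMap.range f := by rw [hrange]; trivial
    exact this
  have hLu : L u = 0 := by rw [hdecomp, hu]; ring
  refine ⟨{ toFun := fun y => u + (g y : Fin (n+1) → ℝ),
            linear := (LinearMap.ker f).subtype.comp g.toLinearMap,
            map_vadd' := by
              intro p v
              simp [add_comm, add_assoc, add_left_comm] }, ?_⟩
  intro z hz
  have hzu : z - u ∈ LinearMap.ker f := by
    rw [LinearMap.mem_ker, map_sub]
    have h1 : f z = L z - L 0 := by rw [hdecomp z]; ring
    have h2 : f u = L u - L 0 := by rw [hdecomp u]; ring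
    rw [h1, h2, hz, hLu]; ring
  refine ⟨g.symm ⟨z - u, hzu⟩, ?_⟩
  show u + ((g (g.symm ⟨z - u, hzu⟩) : LinearMap.ker f) : Fin (n+1) → ℝ) = z
  rw [g.apply_symm_apply]
  simp

lemma choose_sum_aux (N n : ℕ) :
    ∑ k ∈ Finset.range (n+2), N.choose k + ∑ k ∈ Finset.range (n+1), N.choose k
      = ∑ k ∈ Finset.range (n+2), (N+1).choose k := by
  rw [Finset.sum_range_succ' (fun k => (N+1).choose k) (n+1),
      Finset.sum_range_succ' (fun k => N.choose k) (n+1)]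
  simp only [Nat.choose_succ_succ, Nat.choose_zero_right, Finset.sum_add_distrib, Nat.succ_eq_add_one]
  omega

theorem region_count_bound (n N : ℕ) (ℓ : Fin N → ((Fin n → ℝ) →ᵃ[ℝ] ℝ)) :
    {s : Fin N → Bool | (arrRegion ℓ s).Nonempty}.ncard
      ≤ ∑ k ∈ Finset.range (n + 1), N.choose k := by
  induction n generalizing N with
  | zero => simpa using dim_zero ℓ
  | succ n ih =>
    induction N with
    | zero =>
      have h1 : {s : Fin 0 → Bool | (arrRegion ℓ s).Nonempty}.ncard ≤ 1 := by
        rw [Set.ncard_le_one_iff]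
        intro a b _ _
        exact Subsingleton.elim a b
      refine h1.trans ?_
      calc 1 = Nat.choose 0 0 := rfl
        _ ≤ ∑ k ∈ Finset.range (n + 1 + 1), Nat.choose 0 k :=
          Finset.single_le_sum (fun k _ => Nat.zero_le _) (by simp)
    | succ N ihN =>
      set L := ℓ (Fin.last N) with hLdef
      set ℓ' : Fin N → ((Fin (n+1) → ℝ) →ᵃ[ℝ] ℝ) := fun j => ℓ j.castSucc with hℓ'
      set S := {s : Fin (N+1) → Bool | (arrRegion ℓ s).Nonempty} with hS
      set A := {s' : Fin N → Bool | (arrRegion ℓ (Fin.snoc s' true)).Nonempty} with hA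
      set B := {s' : Fin N → Bool | (arrRegion ℓ (Fin.snoc s' false)).Nonempty} with hB
      set S' := {s' : Fin N → Bool | (arrRegion ℓ' s').Nonempty} with hS'
      -- restriction of regions
      have hsub : ∀ (s' : Fin N → Bool) (b : Bool),
          arrRegion ℓ (Fin.snoc s' b) ⊆ arrRegion ℓ' s' := by
        intro s' b x hx
        rw [arrRegion, Set.mem_iInter]
        intro j
        have := Set.mem_iInter.1 hx j.castSucc
        rwa [Fin.snoc_castSucc] at this
      have hAS' : A ⊆ S' := fun s' hs' => hs'.mono (hsub s' true)
      have hBS' : B ⊆ S' := fun s' hs' => hs'.mono (hsub s' false)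
      -- covering S by snoc-images
      have hcover : S ⊆ (fun s' : Fin N → Bool => (Fin.snoc s' true : Fin (N+1) → Bool)) '' A ∪
          (fun s' : Fin N → Bool => (Fin.snoc s' false : Fin (N+1) → Bool)) '' B := by
        intro s hs
        have hself : Fin.snoc (Fin.init s) (s (Fin.last N)) = s := Fin.snoc_init_self s
        cases hlast : s (Fin.last N)
        · right
          refine ⟨Fin.init s, ?_, ?_⟩
          · show (arrRegion ℓ (Fin.snoc (Fin.init s) false)).Nonempty
            rw [← hlast, hself]; exact hs
          · show Fin.snoc (Fin.init s) false = s
            rw [← hlast]; exact hself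
        · left
          refine ⟨Fin.init s, ?_, ?_⟩
          · show (arrRegion ℓ (Fin.snoc (Fin.init s) true)).Nonempty
            rw [← hlast, hself]; exact hs
          · show Fin.snoc (Fin.init s) true = s
            rw [← hlast]; exact hself
      have count1 : S.ncard ≤ A.ncard + B.ncard := by
        calc S.ncard ≤ ((fun s' : Fin N → Bool => (Fin.snoc s' true : Fin (N+1) → Bool)) '' A ∪
              (fun s' : Fin N → Bool => (Fin.snoc s' false : Fin (N+1) → Bool)) '' B).ncard :=
            Set.ncard_le_ncard hcover (Set.toFinite _)
          _ ≤ ((fun s' : Fin N → Bool => (Fin.snoc s' true : Fin (N+1) → Bool)) '' A).ncard +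
              ((fun s' : Fin N → Bool => (Fin.snoc s' false : Fin (N+1) → Bool)) '' B).ncard := Set.ncard_union_le _ _
          _ ≤ A.ncard + B.ncard :=
            add_le_add (Set.ncard_image_le A.toFinite) (Set.ncard_image_le B.toFinite)
      have count2 : A.ncard + B.ncard = (A ∪ B).ncard + (A ∩ B).ncard :=
        (Set.ncard_union_add_ncard_inter A B).symm
      have hS'bound : S'.ncard ≤ ∑ k ∈ Finset.range (n + 1 + 1), N.choose k := ihN ℓ'
      have hABbound : (A ∩ B).ncard ≤ ∑ k ∈ Finset.range (n + 1), N.choose k := by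
        by_cases hlin : L.linear = 0
        · -- L is constant, no region is split
          have : A ∩ B = ∅ := by
            rw [Set.eq_empty_iff_forall_notMem]
            rintro s' ⟨⟨x, hx⟩, ⟨y, hy⟩⟩
            have hx' := Set.mem_iInter.1 hx (Fin.last N)
            have hy' := Set.mem_iInter.1 hy (Fin.last N)
            rw [Fin.snoc_last] at hx' hy'
            simp only [openHalfspace, if_true, Bool.false_eq_true, if_false,
              Set.mem_setOf_eq] at hx' hy'
            have hdx : L x = L.linear x + L 0 := by
              conv_lhs => rw [AffineMap.decomp L]; simp
            have hdy : L y = L.linear y + L 0 := by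
              conv_lhs => rw [AffineMap.decomp L]; simp
            rw [hlin] at hdx hdy
            simp at hdx hdy
            rw [← hLdef] at hx' hy'
            linarith
          rw [this]
          simp
        · -- L is not constant: split regions give regions on the hyperplane L=0
          obtain ⟨e, he⟩ := exists_param L hlin
          set m : Fin N → ((Fin n → ℝ) →ᵃ[ℝ] ℝ) := fun j => (ℓ' j).comp e with hm
          have hsub2 : A ∩ B ⊆ {s' : Fin N → Bool | (arrRegion m s').Nonempty} := by
            rintro s' ⟨⟨x, hx⟩, ⟨y, hy⟩⟩
            have hx' := Set.mem_iInter.1 hx (Fin.last N)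
            have hy' := Set.mem_iInter.1 hy (Fin.last N)
            rw [Fin.snoc_last] at hx' hy'
            simp only [openHalfspace, if_true, Bool.false_eq_true, if_false,
              Set.mem_setOf_eq] at hx' hy'
            rw [← hLdef] at hx' hy'
            set t : ℝ := L x / (L x - L y) with ht
            have hxy : 0 < L x - L y := by linarith
            have ht0 : 0 ≤ t := le_of_lt (div_pos hx' hxy)
            have ht1 : t ≤ 1 := (div_le_one hxy).2 (by linarith)
            set z := AffineMap.lineMap x y t with hz
            have hLz : L z = 0 := by
              rw [hz, AffineMap.apply_lineMap, AffineMap.lineMap_apply]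
              simp only [vsub_eq_sub, vadd_eq_add, smul_eq_mul]
              rw [ht]
              field_simp
              ring
            obtain ⟨w, hw⟩ := he z hLz
            refine ⟨w, ?_⟩
            rw [arrRegion, Set.mem_iInter]
            intro j
            have hxj := Set.mem_iInter.1 hx j.castSucc
            have hyj := Set.mem_iInter.1 hy j.castSucc
            rw [Fin.snoc_castSucc] at hxj hyj
            have hzj : z ∈ openHalfspace (ℓ j.castSucc) (s' j) :=
              halfspace_lineMap _ _ hxj hyj ht0 ht1
            have : (m j) w = (ℓ j.castSucc) z := by
              rw [hm]; simp [hℓ', hw]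
            cases hb : s' j <;> rw [hb] at hzj <;>
              simp only [openHalfspace, if_true, Bool.false_eq_true, if_false,
                Set.mem_setOf_eq] at hzj ⊢ <;> rw [this] <;> exact hzj
          calc (A ∩ B).ncard ≤ {s' : Fin N → Bool | (arrRegion m s').Nonempty}.ncard :=
              Set.ncard_le_ncard hsub2 (Set.toFinite _)
            _ ≤ ∑ k ∈ Finset.range (n + 1), N.choose k := ih N m
      calc S.ncard ≤ A.ncard + B.ncard := count1
        _ = (A ∪ B).ncard + (A ∩ B).ncard := count2
        _ ≤ S'.ncard + (A ∩ B).ncard :=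
          Nat.add_le_add_right (Set.ncard_le_ncard (Set.union_subset hAS' hBS') (Set.toFinite _)) _
        _ ≤ ∑ k ∈ Finset.range (n + 1 + 1), N.choose k +
            ∑ k ∈ Finset.range (n + 1), N.choose k := add_le_add hS'bound hABbound
        _ = ∑ k ∈ Finset.range (n + 1 + 1), (N + 1).choose k := choose_sum_aux N n
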